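/- Let T = {P_1,…,P_m} contain one subgroup from each conjugacy class of prime-order subgroups of a finite group G acting on a commutative ring k. Suppose x_{P_i} ∈ k satisfies tr_{P_i}(x_{P_i}) = 1 for each i. Let X = ∏_i L_{P_i} (L_{P_i} the G-set of complete left coset representative sets of P_i, diagonal action), and let w_1,…,w_s be orbit representatives, w_j = ({g_{ij1},…,g_{ijl_i}})_{i=1}^m. Then x_G = Σ_{j=1}^s ∏_{i=1}^m ∏_{t=1}^{l_i} g_{ijt}(x_{P_i}) satisfies tr_G(x_G) = 1. -/

import Mathlib

/-- `S` is a complete set of left coset representatives of `P` in `G`: it contains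
exactly one element of each left coset of `P`. -/
def IsTransversal {G : Type*} [Group G] (P : Subgroup G) (S : Finset G) : Prop :=
  ∀ g : G, ∃! s : G, s ∈ S ∧ g⁻¹ * s ∈ P

open scoped Classical in
/-- The trace map of the subgroup `H` acting on `k`. -/
noncomputable def tr {G : Type*} [Group G] [Fintype G] {k : Type*} [CommRing k]
    [MulSemiringAction G k] (H : Subgroup G) (x : k) : k :=
  ∑ σ : G, if σ ∈ H then σ • x else 0

open Finset
open scoped Classical

section Aux
variable {G : Type*} [Group G] [Fintype G]

/-- translate of a transversal is a transversal -/
lemma isTransversal_image_mul {P : Subgroup G} {S : Finset G} (hS : IsTransversal P S)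
    (σ : G) : IsTransversal P (S.image (fun t => σ * t)) := by
  intro g
  obtain ⟨s, ⟨hsS, hsP⟩, huniq⟩ := hS (σ⁻¹ * g)
  refine ⟨σ * s, ⟨mem_image_of_mem _ hsS, ?_⟩, ?_⟩
  · have : g⁻¹ * (σ * s) = (σ⁻¹ * g)⁻¹ * s := by group
    rw [this]; exact hsP
  · rintro y ⟨hy, hyP⟩
    obtain ⟨u, hu, rfl⟩ := mem_image.mp hy
    have : (σ⁻¹ * g)⁻¹ * u = g⁻¹ * (σ * u) := by group
    rw [huniq u ⟨hu, by rw [this]; exact hyP⟩]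

lemma no_fix {P : Subgroup G} {S : Finset G} (hS : IsTransversal P S) {h a : G}
    (hconj : (Subgroup.zpowers h).map (MulAut.conj a).toMonoidHom = P)
    (hfix : S.image (fun t => h * t) = S) (hne : h ≠ 1) : False := by
  have haP : a * h * a⁻¹ ∈ P := by
    rw [← hconj]
    exact ⟨h, Subgroup.mem_zpowers h, by simp [MulAut.conj_apply]⟩
  obtain ⟨s, ⟨hsS, hsP⟩, huniq⟩ := hS a⁻¹
  have h1 : h * s ∈ S := by rw [← hfix]; exact mem_image_of_mem _ hsS
  have h2 : (a⁻¹)⁻¹ * (h * s) ∈ P := by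
    have : (a⁻¹)⁻¹ * (h * s) = (a * h * a⁻¹) * ((a⁻¹)⁻¹ * s) := by group
    rw [this]; exact mul_mem haP hsP
  have := huniq (h * s) ⟨h1, h2⟩
  exact hne (by rwa [mul_eq_right] at this)

lemma image_pow_fix {S : Finset G} {σ : G} (hfix : S.image (fun t => σ * t) = S) :
    ∀ n : ℕ, S.image (fun t => σ ^ n * t) = S := by
  intro n
  induction n with
  | zero => simp
  | succ n ih =>
    have : (fun t => σ ^ (n + 1) * t) = (fun t => σ * t) ∘ (fun t => σ ^ n * t) := by
      funext t; simp [pow_succ', mul_assoc]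
    rw [this, ← Finset.image_image, ih, hfix]

end Aux

section Aux2
variable {G : Type*} [Group G] [Fintype G]

lemma stab_eq_one {m : ℕ} {P : Fin m → Subgroup G}
    (hPrep : ∀ Q : Subgroup G, (Nat.card Q).Prime →
      ∃! i : Fin m, ∃ g : G, Q.map (MulAut.conj g).toMonoidHom = P i)
    {v : (i : Fin m) → Finset G} (hv : ∀ i, IsTransversal (P i) (v i))
    {σ : G} (hfix : ∀ i, (v i).image (fun t => σ * t) = v i) : σ = 1 := by
  by_contra hσ
  obtain ⟨q, hq, hqdvd⟩ := (orderOf σ).exists_prime_and_dvd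
    (by simpa [orderOf_eq_one_iff] using hσ)
  haveI := Fact.mk hq
  have hcard : q ∣ Fintype.card (Subgroup.zpowers σ) := by
    rwa [Fintype.card_zpowers]
  obtain ⟨x, hx⟩ := exists_prime_orderOf_dvd_card (G := Subgroup.zpowers σ) q hcard
  have hxo : orderOf (x : G) = q := by rw [← hx]; exact Subgroup.orderOf_coe x
  have hne : (x : G) ≠ 1 := by
    intro h1; rw [h1, orderOf_one] at hxo; exact hq.one_lt.ne' hxo.symm
  have hprime : (Nat.card (Subgroup.zpowers (x : G))).Prime := by
    rwa [Nat.card_zpowers, hxo]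
  obtain ⟨i, ⟨a, hmap⟩, -⟩ := hPrep _ hprime
  obtain ⟨n, hn⟩ := mem_powers_iff_mem_zpowers.mpr x.2
  have hfixh : (v i).image (fun t => (x : G) * t) = v i := by
    rw [← hn]; exact image_pow_fix (hfix i) n
  exact no_fix (hv i) hmap hfixh hne

end Aux2

section Aux3
variable {G k : Type*} [Group G] [Fintype G] [CommRing k] [MulSemiringAction G k]

lemma sum_coset {P : Subgroup G} {x : k} (hx : tr P x = 1) (C : G ⧸ P) :
    ∑ g ∈ univ.filter (fun g : G => (g : G ⧸ P) = C), g • x = 1 := by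
  have h1 : ∑ g ∈ univ.filter (fun g : G => (g : G ⧸ P) = C), g • x
      = ∑ p ∈ univ.filter (fun p : G => p ∈ P), (C.out * p) • x := by
    refine Finset.sum_nbij' (i := fun g => C.out⁻¹ * g) (j := fun p => C.out * p)
      ?_ ?_ ?_ ?_ ?_
    · intro g hg
      simp only [mem_filter, mem_univ, true_and] at hg ⊢
      rw [← QuotientGroup.out_eq' C] at hg
      have := inv_mem (QuotientGroup.eq.mp hg)
      simpa using this
    · intro p hp
      simp only [mem_filter, mem_univ, true_and] at hp ⊢
      rw [← QuotientGroup.out_eq' C]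
      exact (QuotientGroup.eq.mpr (by simpa using hp)).symm
    · intro g _; simp
    · intro p _; simp
    · intro g _; simp
  rw [h1]
  have h2 : ∀ p : G, (C.out * p) • x = C.out • (p • x) := fun p => mul_smul _ _ _
  simp_rw [h2, ← Finset.smul_sum]
  have h3 : ∑ p ∈ univ.filter (fun p : G => p ∈ P), p • x = tr P x := by
    rw [tr, Finset.sum_filter]
  rw [h3, hx, smul_one]

lemma sum_transversals {P : Subgroup G} {x : k} (hx : tr P x = 1) :
    ∑ S ∈ univ.filter (fun S : Finset G => IsTransversal P S), ∏ g ∈ S, g • x = 1 := by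
  have key : ∑ f ∈ Fintype.piFinset
        (fun C : G ⧸ P => univ.filter (fun g : G => (g : G ⧸ P) = C)),
        ∏ C : G ⧸ P, (f C) • x
      = ∑ S ∈ univ.filter (fun S : Finset G => IsTransversal P S), ∏ g ∈ S, g • x := by
    refine Finset.sum_bij (i := fun f _ => univ.image f) ?_ ?_ ?_ ?_
    · intro f hf
      simp only [Fintype.mem_piFinset, mem_filter, mem_univ, true_and] at hf
      simp only [mem_filter, mem_univ, true_and]
      intro g
      refine ⟨f ↑g, ⟨mem_image_of_mem f (mem_univ _), QuotientGroup.eq.mp (hf ↑g).symm⟩, ?_⟩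
      rintro y ⟨hy, hyP⟩
      obtain ⟨C, -, rfl⟩ := mem_image.mp hy
      have hC : C = (g : G ⧸ P) := by
        rw [← hf C, QuotientGroup.eq.mpr hyP]
      rw [hC]
    · intro f₁ hf₁ f₂ hf₂ heq
      simp only [Fintype.mem_piFinset, mem_filter, mem_univ, true_and] at hf₁ hf₂
      funext C
      have heq' : univ.image f₁ = univ.image f₂ := heq
      have h1 : f₁ C ∈ univ.image f₂ := heq' ▸ mem_image_of_mem f₁ (mem_univ _)
      obtain ⟨C', -, hC'⟩ := mem_image.mp h1
      have : C' = C := by rw [← hf₂ C', hC', hf₁ C]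
      rw [← hC', this]
    · intro S hS
      simp only [mem_filter, mem_univ, true_and] at hS
      refine ⟨fun C => ((hS C.out).exists).choose, ?_, ?_⟩
      · simp only [Fintype.mem_piFinset, mem_filter, mem_univ, true_and]
        intro C
        have hspec := ((hS C.out).exists).choose_spec
        have : ((C.out : G) : G ⧸ P) = ↑(((hS C.out).exists).choose) :=
          QuotientGroup.eq.mpr hspec.2
        rw [← this, QuotientGroup.out_eq']
      · ext y
        simp only [mem_image, mem_univ, true_and]
        constructor
        · rintro ⟨C, rfl⟩
          exact ((hS C.out).exists).choose_spec.1
        · intro hy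
          refine ⟨↑y, ?_⟩
          have hspec := ((hS ((y : G ⧸ P)).out).exists).choose_spec
          have hy2 : y ∈ S ∧ (((y : G ⧸ P)).out)⁻¹ * y ∈ P :=
            ⟨hy, QuotientGroup.eq.mp (QuotientGroup.out_eq' (y : G ⧸ P))⟩
          exact (hS ((y : G ⧸ P)).out).unique hspec hy2
    · intro f hf
      simp only [Fintype.mem_piFinset, mem_filter, mem_univ, true_and] at hf
      rw [Finset.prod_image]
      intro C _ C' _ hCC'
      rw [← hf C, hCC', hf C']
  have hps := Finset.prod_univ_sum
    (fun C : G ⧸ P => univ.filter (fun g : G => (g : G ⧸ P) = C))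
    (fun (_ : G ⧸ P) (g : G) => g • x)
  rw [← key, ← hps]
  exact Finset.prod_eq_one (fun C _ => sum_coset hx C)

end Aux3

section Aux4
variable {G k : Type*} [Group G] [Fintype G] [CommRing k] [MulSemiringAction G k]

lemma smul_prod_prod (σ : G) {m : ℕ} (v : Fin m → Finset G) (xP : Fin m → k) :
    σ • (∏ i, ∏ g ∈ v i, g • xP i)
      = ∏ i, ∏ g ∈ (v i).image (fun t => σ * t), g • xP i := by
  rw [show σ • (∏ i, ∏ g ∈ v i, g • xP i)
      = MulSemiringAction.toRingHom G k σ (∏ i, ∏ g ∈ v i, g • xP i) from rfl, map_prod]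
  refine Finset.prod_congr rfl fun i _ => ?_
  rw [map_prod, Finset.prod_image (fun a _ b _ h => mul_left_cancel h)]
  refine Finset.prod_congr rfl fun g _ => ?_
  show σ • (g • xP i) = (σ * g) • xP i
  rw [mul_smul]

lemma image_mul_mul (a b : G) (S : Finset G) :
    (S.image (fun t => b * t)).image (fun t => a * t)
      = S.image (fun t => (a * b) * t) := by
  rw [Finset.image_image]; congr 1; funext t; simp [mul_assoc]

lemma image_one_mul (S : Finset G) : S.image (fun t => (1 : G) * t) = S := by
  simp

end Aux4

open scoped Classical in
/-- The explicit formula for an element of trace `1` for `G` in terms of elements of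
trace `1` for representatives `P 1, …, P m` of the conjugacy classes of prime-order
subgroups: if `w 1, …, w s` are representatives of the orbits of the diagonal action of
`G` on the product of the sets of transversals of the `P i`, then
`x_G = ∑_j ∏_i ∏_{g ∈ w j i} g • x_{P i}` satisfies `tr_G x_G = 1`. -/
theorem trace_one_formula {G k : Type*} [Group G] [Fintype G] [CommRing k]
    [MulSemiringAction G k]
    (m : ℕ) (P : Fin m → Subgroup G)
    (hPprime : ∀ i, (Nat.card (P i)).Prime)
    (hPrep : ∀ Q : Subgroup G, (Nat.card Q).Prime →
      ∃! i : Fin m, ∃ g : G, Q.map (MulAut.conj g).toMonoidHom = P i)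
    (xP : Fin m → k) (hxP : ∀ i, tr (P i) (xP i) = 1)
    (s : ℕ) (w : Fin s → (i : Fin m) → Finset G)
    (hw : ∀ j i, IsTransversal (P i) (w j i))
    (horb : ∀ v : (i : Fin m) → Finset G, (∀ i, IsTransversal (P i) (v i)) →
      ∃! j : Fin s, ∃ g : G, (fun i => (v i).image (fun t => g * t)) = w j) :
    tr (⊤ : Subgroup G) (∑ j : Fin s, ∏ i : Fin m, ∏ g ∈ w j i, g • xP i) = 1 := by

  rw [tr]
  simp only [Subgroup.mem_top, if_true]
  have e1 : ∑ σ : G, σ • (∑ j : Fin s, ∏ i : Fin m, ∏ g ∈ w j i, g • xP i)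
      = ∑ σ : G, ∑ j : Fin s, ∏ i : Fin m,
          ∏ g ∈ (w j i).image (fun t => σ * t), g • xP i :=
    Finset.sum_congr rfl fun σ _ => by
      rw [Finset.smul_sum]
      exact Finset.sum_congr rfl fun j _ => smul_prod_prod σ (w j) xP
  rw [e1, ← Finset.sum_product']
  have main : ∑ p ∈ (univ : Finset G) ×ˢ (univ : Finset (Fin s)),
        ∏ i : Fin m, ∏ g ∈ (w p.2 i).image (fun t => p.1 * t), g • xP i
      = ∑ v ∈ univ.filter
          (fun v : (i : Fin m) → Finset G => ∀ i, IsTransversal (P i) (v i)),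
          ∏ i : Fin m, ∏ g ∈ v i, g • xP i := by
    refine Finset.sum_bij
      (i := fun p _ => fun i => (w p.2 i).image (fun t => p.1 * t)) ?_ ?_ ?_ ?_
    · intro p _
      simp only [mem_filter, mem_univ, true_and]
      exact fun i => isTransversal_image_mul (hw p.2 i) p.1
    · intro p1 hp1 p2 hp2 hpq
      obtain ⟨σ, j⟩ := p1
      obtain ⟨σ', j'⟩ := p2
      simp only at hpq ⊢
      have heq' : ∀ i, (w j i).image (fun t => σ * t) = (w j' i).image (fun t => σ' * t) :=
        fun i => congrFun hpq i
      have hv : ∀ i, IsTransversal (P i) ((w j i).image (fun t => σ * t)) :=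
        fun i => isTransversal_image_mul (hw j i) σ
      obtain ⟨j₀, -, huniq⟩ := horb _ hv
      have hback : ∀ (τ : G) (j₁ : Fin s),
          (∀ i, (w j₁ i).image (fun t => τ * t) = (w j i).image (fun t => σ * t)) →
          j₁ = j₀ := by
        intro τ j₁ h
        refine huniq j₁ ⟨τ⁻¹, ?_⟩
        funext i
        show ((w j i).image (fun t => σ * t)).image (fun t => τ⁻¹ * t) = w j₁ i
        rw [← h i, image_mul_mul, inv_mul_cancel, image_one_mul]
      have hjj : j = j' := (hback σ j fun i => rfl).trans
        (hback σ' j' fun i => (heq' i).symm).symm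
      subst hjj
      have hfix : ∀ i, (w j i).image (fun t => (σ'⁻¹ * σ) * t) = w j i := by
        intro i
        rw [← image_mul_mul, heq' i, image_mul_mul, inv_mul_cancel, image_one_mul]
      have hone := stab_eq_one hPrep (hw j) hfix
      have hσ : σ' = σ := by rwa [inv_mul_eq_one] at hone
      rw [hσ]
    · intro v hv
      simp only [mem_filter, mem_univ, true_and] at hv
      obtain ⟨j, ⟨g, hg⟩, -⟩ := horb v hv
      refine ⟨(g⁻¹, j), mem_univ _, ?_⟩
      funext i
      have h1 := congrFun hg i
      show (w j i).image (fun t => g⁻¹ * t) = v i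
      rw [← h1, image_mul_mul, inv_mul_cancel, image_one_mul]
    · intro p _; rfl
  rw [main]
  have hfil : univ.filter
        (fun v : (i : Fin m) → Finset G => ∀ i, IsTransversal (P i) (v i))
      = Fintype.piFinset
          (fun i => univ.filter (fun S : Finset G => IsTransversal (P i) S)) := by
    ext v; simp [Fintype.mem_piFinset]
  rw [hfil]
  have hps := Finset.prod_univ_sum
    (fun i => univ.filter (fun S : Finset G => IsTransversal (P i) S))
    (fun i (S : Finset G) => ∏ g ∈ S, g • xP i)
  rw [← hps]
  exact Finset.prod_eq_one fun i _ => sum_transversals (hxP i)
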